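/- arXiv:math-ph/0703044 — 3 statements merged into one kernel-verified Lean document; each statement's English description precedes it below -/
import Mathlib

section
/- On the Poisson manifold (ℝ³)^N with brackets {y_i^α, y_j^β} = -δ_{ij} ε_{αβγ} y_i^γ, the rational Gaudin Hamiltonians H_i = ⟨p, y_i⟩ + Σ_{j≠i} ⟨y_i, y_j⟩/(λ_i - λ_j) (1 ≤ i ≤ N), where p ∈ ℝ³ is a constant vector and λ₁,…,λ_N are pairwise distinct real numbers, are pairwise in involution: {H_i, H_j} = 0 for all i, j. -/
open Matrix

variable (N : ℕ)

/-- Gradient with respect to the `i`-th `ℝ³` variable. -/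
noncomputable def gradI (F : (Fin N → Fin 3 → ℝ) → ℝ) (y : Fin N → Fin 3 → ℝ)
    (i : Fin N) : Fin 3 → ℝ :=
  fun α => fderiv ℝ F y (Pi.single i (Pi.single α 1))

/-- The product `su(2)*` Lie–Poisson bracket on `(ℝ³)^N`. -/
noncomputable def poissonBracket (F G : (Fin N → Fin 3 → ℝ) → ℝ)
    (y : Fin N → Fin 3 → ℝ) : ℝ :=
  -∑ i : Fin N, y i ⬝ᵥ (gradI N F y i ⨯₃ gradI N G y i)

/-- The rational Gaudin Hamiltonian `H_i`. -/
noncomputable def gaudinH (p : Fin 3 → ℝ) (lam : Fin N → ℝ) (i : Fin N)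
    (y : Fin N → Fin 3 → ℝ) : ℝ :=
  p ⬝ᵥ y i + ∑ j ∈ Finset.univ.filter (· ≠ i), (y i ⬝ᵥ y j) / (lam i - lam j)

/-- The coordinate evaluation `y ↦ y i α` as a continuous linear map. -/
noncomputable def coordL (i : Fin N) (α : Fin 3) : (Fin N → Fin 3 → ℝ) →L[ℝ] ℝ :=
  (ContinuousLinearMap.proj (R := ℝ) (φ := fun _ : Fin 3 => ℝ) α).comp
    (ContinuousLinearMap.proj (R := ℝ) (φ := fun _ : Fin N => Fin 3 → ℝ) i)

lemma coordL_single (i k : Fin N) (α β : Fin 3) :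
    coordL N i α (Pi.single k (Pi.single β 1)) =
      if i = k then (if α = β then 1 else 0) else 0 := by
  simp only [coordL, ContinuousLinearMap.comp_apply, ContinuousLinearMap.proj_apply,
    Pi.single_apply]
  split <;> simp [Pi.single_apply]

lemma hasFDerivAt_gaudinH (p : Fin 3 → ℝ) (lam : Fin N → ℝ) (i : Fin N)
    (y : Fin N → Fin 3 → ℝ) :
    HasFDerivAt (gaudinH N p lam i)
      ((∑ α, p α • coordL N i α) +
        ∑ j ∈ Finset.univ.filter (· ≠ i), (lam i - lam j)⁻¹ •
          ∑ α, (y i α • coordL N j α + y j α • coordL N i α)) y := by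
  have h1 : gaudinH N p lam i = fun y : Fin N → Fin 3 → ℝ => (∑ α, p α * y i α) +
      ∑ j ∈ Finset.univ.filter (· ≠ i), (∑ α, y i α * y j α) * (lam i - lam j)⁻¹ := by
    funext y; simp [gaudinH, dotProduct, div_eq_mul_inv]
  rw [h1]
  exact (HasFDerivAt.fun_sum fun α _ => ((coordL N i α).hasFDerivAt.const_mul (p α))).add
    (HasFDerivAt.fun_sum fun j _ =>
      (HasFDerivAt.fun_sum fun α _ =>
        ((coordL N i α).hasFDerivAt.mul (coordL N j α).hasFDerivAt)).mul_const _)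

lemma gradI_gaudin_self (p : Fin 3 → ℝ) (lam : Fin N → ℝ) (i : Fin N)
    (y : Fin N → Fin 3 → ℝ) :
    gradI N (gaudinH N p lam i) y i =
      fun α => p α + ∑ j ∈ Finset.univ.filter (· ≠ i), (lam i - lam j)⁻¹ * y j α := by
  funext α
  rw [gradI, (hasFDerivAt_gaudinH N p lam i y).fderiv]
  simp only [ContinuousLinearMap.add_apply, ContinuousLinearMap.sum_apply,
    ContinuousLinearMap.smul_apply, coordL_single, smul_eq_mul, mul_ite, mul_one, mul_zero,
    eq_self_iff_true, if_true, Finset.sum_ite_eq', Finset.mem_univ]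
  congr 1
  refine Finset.sum_congr rfl fun x hx => ?_
  simp only [Finset.mem_filter] at hx
  simp [hx.2, mul_ite, Finset.sum_ite_eq']

lemma gradI_gaudin_ne (p : Fin 3 → ℝ) (lam : Fin N → ℝ) (i k : Fin N) (hk : k ≠ i)
    (y : Fin N → Fin 3 → ℝ) :
    gradI N (gaudinH N p lam i) y k = fun α => (lam i - lam k)⁻¹ * y i α := by
  funext α
  rw [gradI, (hasFDerivAt_gaudinH N p lam i y).fderiv]
  simp only [ContinuousLinearMap.add_apply, ContinuousLinearMap.sum_apply,
    ContinuousLinearMap.smul_apply, coordL_single, smul_eq_mul, mul_ite, mul_one, mul_zero,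
    eq_self_iff_true, if_true, Finset.sum_ite_eq', Finset.mem_univ]
  simp only [Ne.symm hk, if_false]
  have h2 : ∀ x ∈ Finset.univ.filter (· ≠ i),
      (lam i - lam x)⁻¹ * ∑ β : Fin 3, ((if x = k then if β = α then y i β else 0 else 0) + 0) =
      (if x = k then (lam i - lam x)⁻¹ * y i α else 0) := by
    intro x hx
    by_cases h : x = k <;> simp [h, Finset.sum_ite_eq']
  rw [Finset.sum_congr rfl h2]
  simp [Finset.sum_ite_eq', hk]

lemma gradI_gaudin_self' (p : Fin 3 → ℝ) (lam : Fin N → ℝ) (i : Fin N)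
    (y : Fin N → Fin 3 → ℝ) :
    gradI N (gaudinH N p lam i) y i =
      p + ∑ j ∈ Finset.univ.filter (· ≠ i), (lam i - lam j)⁻¹ • y j := by
  rw [gradI_gaudin_self]
  funext α
  simp [Finset.sum_apply]

lemma gradI_gaudin_ne' (p : Fin 3 → ℝ) (lam : Fin N → ℝ) (i k : Fin N) (hk : k ≠ i)
    (y : Fin N → Fin 3 → ℝ) :
    gradI N (gaudinH N p lam i) y k = (lam i - lam k)⁻¹ • y i := by
  rw [gradI_gaudin_ne N p lam i k hk]
  funext α
  simp

lemma dotProduct_sum' (w : Fin 3 → ℝ) (s : Finset (Fin N)) (f : Fin N → Fin 3 → ℝ) :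
    w ⬝ᵥ (∑ m ∈ s, f m) = ∑ m ∈ s, w ⬝ᵥ f m := by
  simp only [dotProduct, Finset.sum_apply, Finset.mul_sum]
  rw [Finset.sum_comm]

/-- The rational Gaudin Hamiltonians are pairwise in involution. -/
theorem gaudin_involution (p : Fin 3 → ℝ) (lam : Fin N → ℝ)
    (hlam : Function.Injective lam) (i j : Fin N) (y : Fin N → Fin 3 → ℝ) :
    poissonBracket N (gaudinH N p lam i) (gaudinH N p lam j) y = 0 := by
  by_cases hij : i = j
  · subst hij
    simp [poissonBracket, cross_self]
  have hji : j ≠ i := Ne.symm hij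
  rw [poissonBracket, neg_eq_zero,
    ← Finset.add_sum_erase _ _ (Finset.mem_univ i),
    ← Finset.add_sum_erase _ _ (Finset.mem_erase.mpr ⟨hji, Finset.mem_univ j⟩)]
  set S := (Finset.univ.erase i).erase j with hS
  have tail : ∑ k ∈ S, y k ⬝ᵥ
        (gradI N (gaudinH N p lam i) y k ⨯₃ gradI N (gaudinH N p lam j) y k)
      = ∑ m ∈ S, ((lam i - lam m)⁻¹ * (lam j - lam m)⁻¹) * (y m ⬝ᵥ (y i ⨯₃ y j)) := by
    refine Finset.sum_congr rfl fun k hk => ?_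
    simp only [hS, Finset.mem_erase] at hk
    rw [gradI_gaudin_ne' N p lam i k hk.2.1, gradI_gaudin_ne' N p lam j k hk.1]
    simp only [_root_.map_smul, LinearMap.smul_apply, dotProduct_smul, smul_eq_mul]
    ring
  have ti : y i ⬝ᵥ (gradI N (gaudinH N p lam i) y i ⨯₃ gradI N (gaudinH N p lam j) y i)
      = (lam j - lam i)⁻¹ * (y i ⬝ᵥ (p ⨯₃ y j))
        + ∑ m ∈ S, ((lam i - lam m)⁻¹ * (lam j - lam i)⁻¹) * (y i ⬝ᵥ (y m ⨯₃ y j)) := by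
    rw [gradI_gaudin_self' N p lam i y, gradI_gaudin_ne' N p lam j i hij]
    simp only [map_add, LinearMap.add_apply, map_sum, LinearMap.sum_apply, _root_.map_smul,
      LinearMap.smul_apply, dotProduct_add, dotProduct_smul, dotProduct_sum', smul_eq_mul]
    rw [Finset.filter_ne', ← Finset.add_sum_erase _ _
      (Finset.mem_erase.mpr ⟨hji, Finset.mem_univ j⟩)]
    rw [cross_self (y j)]
    simp only [dotProduct_zero, mul_zero, zero_add]
    rw [← hS, mul_add, Finset.mul_sum]
    congr 1
    exact Finset.sum_congr rfl fun m _ => by ring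
  have tj : y j ⬝ᵥ (gradI N (gaudinH N p lam i) y j ⨯₃ gradI N (gaudinH N p lam j) y j)
      = (lam i - lam j)⁻¹ * (y j ⬝ᵥ (y i ⨯₃ p))
        + ∑ m ∈ S, ((lam i - lam j)⁻¹ * (lam j - lam m)⁻¹) * (y j ⬝ᵥ (y i ⨯₃ y m)) := by
    rw [gradI_gaudin_self' N p lam j y, gradI_gaudin_ne' N p lam i j hji]
    simp only [map_add, LinearMap.add_apply, map_sum, LinearMap.sum_apply, _root_.map_smul,
      LinearMap.smul_apply, dotProduct_add, dotProduct_smul, dotProduct_sum', smul_eq_mul]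
    rw [Finset.filter_ne', ← Finset.add_sum_erase _ _
      (Finset.mem_erase.mpr ⟨hij, Finset.mem_univ i⟩)]
    rw [cross_self (y i)]
    simp only [dotProduct_zero, mul_zero, zero_add, smul_zero]
    rw [Finset.erase_right_comm, ← hS]
    congr 1
    exact Finset.sum_congr rfl fun m _ => by ring
  rw [ti, tj, tail]
  have hA : y j ⬝ᵥ (y i ⨯₃ p) = y i ⬝ᵥ (p ⨯₃ y j) := triple_product_permutation _ _ _
  have hcji : (lam i - lam j)⁻¹ = -(lam j - lam i)⁻¹ := by rw [show lam i - lam j = -(lam j - lam i) by ring, inv_neg]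
  have key : ∀ m ∈ S,
      ((lam i - lam m)⁻¹ * (lam j - lam i)⁻¹) * (y i ⬝ᵥ (y m ⨯₃ y j))
      + ((lam i - lam j)⁻¹ * (lam j - lam m)⁻¹) * (y j ⬝ᵥ (y i ⨯₃ y m))
      + ((lam i - lam m)⁻¹ * (lam j - lam m)⁻¹) * (y m ⬝ᵥ (y i ⨯₃ y j)) = 0 := by
    intro m hm
    simp only [hS, Finset.mem_erase] at hm
    have hmj : m ≠ j := hm.1
    have hmi : m ≠ i := hm.2.1
    have d1 : lam i - lam j ≠ 0 := sub_ne_zero.mpr fun h => hij (hlam h)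
    have d2 : lam j - lam i ≠ 0 := sub_ne_zero.mpr fun h => hji (hlam h)
    have d3 : lam i - lam m ≠ 0 := sub_ne_zero.mpr fun h => hmi.symm (hlam h)
    have d4 : lam j - lam m ≠ 0 := sub_ne_zero.mpr fun h => hmj.symm (hlam h)
    have h1 : y i ⬝ᵥ (y m ⨯₃ y j) = -(y m ⬝ᵥ (y i ⨯₃ y j)) := by
      rw [triple_product_permutation, ← cross_anticomm, dotProduct_neg]
    have h2 : y j ⬝ᵥ (y i ⨯₃ y m) = -(y m ⬝ᵥ (y i ⨯₃ y j)) := by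
      rw [triple_product_permutation, triple_product_permutation, ← cross_anticomm,
        dotProduct_neg]
    rw [h1, h2]
    have hzero : ((lam i - lam m)⁻¹ * (lam j - lam i)⁻¹) * (-1)
        + ((lam i - lam j)⁻¹ * (lam j - lam m)⁻¹) * (-1)
        + (lam i - lam m)⁻¹ * (lam j - lam m)⁻¹ = 0 := by
      field_simp
      ring
    linear_combination (y m ⬝ᵥ (y i ⨯₃ y j)) * hzero
  calc ((lam j - lam i)⁻¹ * (y i ⬝ᵥ (p ⨯₃ y j))
        + ∑ m ∈ S, ((lam i - lam m)⁻¹ * (lam j - lam i)⁻¹) * (y i ⬝ᵥ (y m ⨯₃ y j)))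
      + (((lam i - lam j)⁻¹ * (y j ⬝ᵥ (y i ⨯₃ p))
        + ∑ m ∈ S, ((lam i - lam j)⁻¹ * (lam j - lam m)⁻¹) * (y j ⬝ᵥ (y i ⨯₃ y m)))
        + ∑ m ∈ S, ((lam i - lam m)⁻¹ * (lam j - lam m)⁻¹) * (y m ⬝ᵥ (y i ⨯₃ y j)))
      = ((lam j - lam i)⁻¹ * (y i ⬝ᵥ (p ⨯₃ y j))
          + (lam i - lam j)⁻¹ * (y j ⬝ᵥ (y i ⨯₃ p)))
        + ∑ m ∈ S, (((lam i - lam m)⁻¹ * (lam j - lam i)⁻¹) * (y i ⬝ᵥ (y m ⨯₃ y j))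
          + ((lam i - lam j)⁻¹ * (lam j - lam m)⁻¹) * (y j ⬝ᵥ (y i ⨯₃ y m))
          + ((lam i - lam m)⁻¹ * (lam j - lam m)⁻¹) * (y m ⬝ᵥ (y i ⨯₃ y j))) := by
        simp only [Finset.sum_add_distrib]; ring
    _ = 0 := by
        rw [Finset.sum_eq_zero key, hA, hcji]; ring
end

section
/- Let y₁,…,y_N : ℝ → ℝ³ be differentiable and suppose they satisfy the Gaudin flow ẏ_i = (λ_i p + Σ_j y_j) × y_i for constant p ∈ ℝ³ and pairwise distinct reals λ_i. Then for every λ ∉ {λ₁,…,λ_N}, the Lax matrix L(λ) = P + Σ_i Y_i/(λ - λ_i) (matrices via the ℝ³ ≅ su(2) identification) satisfies the Lax equation d/dt L(λ) = [L(λ), M(λ)] with M(λ) = Σ_i λ_i Y_i/(λ - λ_i). -/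
open Matrix

/-- The standard identification of `ℝ³` with `su(2)`. -/
noncomputable def su2 (a : Fin 3 → ℝ) : Matrix (Fin 2) (Fin 2) ℂ :=
  (1 / 2 : ℂ) • !![-Complex.I * a 2, -Complex.I * a 0 - a 1;
                   -Complex.I * a 0 + a 1, Complex.I * a 2]

/-- The rational Gaudin Lax matrix `L(λ) = P + Σ_i Y_i/(λ - λ_i)`. -/
noncomputable def gaudinLax {N : ℕ} (p : Fin 3 → ℝ) (lam : Fin N → ℝ)
    (y : Fin N → Fin 3 → ℝ) (l : ℝ) : Matrix (Fin 2) (Fin 2) ℂ :=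
  su2 p + ∑ i : Fin N, ((l : ℂ) - (lam i : ℂ))⁻¹ • su2 (y i)

/-- The auxiliary matrix `M(λ) = Σ_i λ_i Y_i/(λ - λ_i)`. -/
noncomputable def gaudinM {N : ℕ} (lam : Fin N → ℝ)
    (y : Fin N → Fin 3 → ℝ) (l : ℝ) : Matrix (Fin 2) (Fin 2) ℂ :=
  ∑ i : Fin N, (((lam i : ℂ)) * ((l : ℂ) - (lam i : ℂ))⁻¹) • su2 (y i)

/-- The `su(2)` identification intertwines the cross product and the commutator. -/
lemma su2_cross (a b : Fin 3 → ℝ) : su2 (a ⨯₃ b) = su2 a * su2 b - su2 b * su2 a := by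
  ext k m
  fin_cases k <;> fin_cases m <;>
    simp [su2, crossProduct, Matrix.mul_apply, Fin.sum_univ_succ] <;>
    push_cast <;> ring_nf <;> simp [Complex.ext_iff] <;> ring

lemma su2_smul_add (r : ℝ) (a b : Fin 3 → ℝ) :
    su2 (r • a + b) = (r : ℂ) • su2 a + su2 b := by
  ext k m
  fin_cases k <;> fin_cases m <;> simp [su2] <;> push_cast <;> ring

lemma su2_add (a b : Fin 3 → ℝ) : su2 (a + b) = su2 a + su2 b := by
  have := su2_smul_add 1 a b
  simpa using this

lemma su2_sum {N : ℕ} (f : Fin N → Fin 3 → ℝ) :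
    su2 (∑ i, f i) = ∑ i, su2 (f i) :=
  map_sum (AddMonoidHom.mk' su2 su2_add) f Finset.univ

/-- Each entry of `su2` composed with a differentiable curve is differentiable. -/
lemma su2_entry_deriv (f : ℝ → Fin 3 → ℝ) (f' : Fin 3 → ℝ) (t : ℝ)
    (h : HasDerivAt f f' t) (k m : Fin 2) :
    HasDerivAt (fun t => su2 (f t) k m) (su2 f' k m) t := by
  have hj : ∀ j, HasDerivAt (fun t => ((f t j : ℝ) : ℂ)) (f' j) t :=
    fun j => ((hasDerivAt_pi.mp h) j).ofReal_comp
  have h00 := (((hj 2).const_mul (-Complex.I)).const_mul (1/2 : ℂ))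
  have h01 := ((((hj 0).const_mul (-Complex.I)).sub (hj 1)).const_mul (1/2 : ℂ))
  have h10 := ((((hj 0).const_mul (-Complex.I)).add (hj 1)).const_mul (1/2 : ℂ))
  have h11 := (((hj 2).const_mul (Complex.I)).const_mul (1/2 : ℂ))
  fin_cases k <;> fin_cases m
  · simpa [su2, mul_sub, mul_add] using h00
  · simpa [su2, mul_sub, mul_add] using h01
  · simpa [su2, mul_sub, mul_add] using h10
  · simpa [su2, mul_sub, mul_add] using h11

/-- The core algebraic identity behind the Lax equation. -/
lemma gaudin_key {N : ℕ} (P : Matrix (Fin 2) (Fin 2) ℂ) (Y : Fin N → Matrix (Fin 2) (Fin 2) ℂ)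
    (lam : Fin N → ℂ) (c : Fin N → ℂ) (l : ℂ) (hc : ∀ i, lam i * c i = l * c i - 1) :
    ∑ i, c i • ((lam i • P + ∑ j, Y j) * Y i - Y i * (lam i • P + ∑ j, Y j))
      = (P + ∑ i, c i • Y i) * (∑ i, (lam i * c i) • Y i)
        - (∑ i, (lam i * c i) • Y i) * (P + ∑ i, c i • Y i) := by
  have hS0 : (∑ i, ∑ j, (c i * c j) • (Y i * Y j - Y j * Y i)) = 0 := by
    have h1 : (∑ i, ∑ j, (c i * c j) • (Y i * Y j - Y j * Y i))
        = -∑ i, ∑ j, (c i * c j) • (Y i * Y j - Y j * Y i) := by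
      conv_lhs => rw [Finset.sum_comm]
      rw [← Finset.sum_neg_distrib]
      refine Finset.sum_congr rfl fun j _ => ?_
      rw [← Finset.sum_neg_distrib]
      refine Finset.sum_congr rfl fun i _ => ?_
      rw [mul_comm, ← smul_neg, neg_sub]
    have h3 : (2:ℂ) • (∑ i, ∑ j, (c i * c j) • (Y i * Y j - Y j * Y i)) = 0 := by
      rw [two_smul]
      exact add_eq_zero_iff_eq_neg.mpr h1
    rcases smul_eq_zero.mp h3 with h | h
    · norm_num at h
    · exact h
  have step1 : ∑ i, c i • ((lam i • P + ∑ j, Y j) * Y i - Y i * (lam i • P + ∑ j, Y j))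
      = (∑ i, (lam i * c i) • (P * Y i - Y i * P))
        + ∑ i, ∑ j, c i • (Y j * Y i - Y i * Y j) := by
    rw [← Finset.sum_add_distrib]
    refine Finset.sum_congr rfl fun i _ => ?_
    have h : (lam i • P + ∑ j, Y j) * Y i - Y i * (lam i • P + ∑ j, Y j)
        = lam i • (P * Y i - Y i * P) + ∑ j, (Y j * Y i - Y i * Y j) := by
      rw [add_mul, mul_add, Finset.sum_mul, Finset.mul_sum, smul_mul_assoc, mul_smul_comm,
        smul_sub, Finset.sum_sub_distrib]
      abel
    rw [h, smul_add, smul_smul, mul_comm (c i), Finset.smul_sum]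
  have hPM : P * (∑ i, (lam i * c i) • Y i) - (∑ i, (lam i * c i) • Y i) * P
      = ∑ i, (lam i * c i) • (P * Y i - Y i * P) := by
    rw [Finset.mul_sum, Finset.sum_mul, ← Finset.sum_sub_distrib]
    exact Finset.sum_congr rfl fun i _ => by
      rw [mul_smul_comm, smul_mul_assoc, smul_sub]
  have hUM : (∑ i, c i • Y i) * (∑ i, (lam i * c i) • Y i)
        - (∑ i, (lam i * c i) • Y i) * (∑ i, c i • Y i)
      = ∑ i, ∑ j, (c i * (lam j * c j)) • (Y i * Y j - Y j * Y i) := by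
    rw [Finset.sum_mul_sum, Finset.sum_mul_sum,
      Finset.sum_comm (f := fun i j => ((lam i * c i) • Y i) * (c j • Y j)),
      ← Finset.sum_sub_distrib]
    refine Finset.sum_congr rfl fun i _ => ?_
    rw [← Finset.sum_sub_distrib]
    refine Finset.sum_congr rfl fun j _ => ?_
    rw [smul_mul_assoc, smul_mul_assoc, mul_smul_comm, mul_smul_comm, smul_smul, smul_smul,
      smul_sub, mul_comm (lam j * c j) (c i)]
  have hcross : ∑ i, ∑ j, (c i * (lam j * c j)) • (Y i * Y j - Y j * Y i)
      = ∑ i, ∑ j, c i • (Y j * Y i - Y i * Y j) := by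
    have expand : ∀ i j : Fin N, (c i * (lam j * c j)) • (Y i * Y j - Y j * Y i)
        = (l * (c i * c j)) • (Y i * Y j - Y j * Y i) + c i • (Y j * Y i - Y i * Y j) := by
      intro i j
      rw [hc j]
      have h : c i * (l * c j - 1) = l * (c i * c j) + (-1) * c i := by ring
      rw [h, add_smul]
      congr 1
      rw [neg_one_mul, neg_smul, ← smul_neg, neg_sub]
    calc ∑ i, ∑ j, (c i * (lam j * c j)) • (Y i * Y j - Y j * Y i)
        = ∑ i, ∑ j, ((l * (c i * c j)) • (Y i * Y j - Y j * Y i)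
            + c i • (Y j * Y i - Y i * Y j)) :=
          Finset.sum_congr rfl fun i _ => Finset.sum_congr rfl fun j _ => expand i j
      _ = (∑ i, ∑ j, (l * (c i * c j)) • (Y i * Y j - Y j * Y i))
            + ∑ i, ∑ j, c i • (Y j * Y i - Y i * Y j) := by
          rw [← Finset.sum_add_distrib]
          exact Finset.sum_congr rfl fun i _ => by rw [Finset.sum_add_distrib]
      _ = ∑ i, ∑ j, c i • (Y j * Y i - Y i * Y j) := by
          have h : (∑ i, ∑ j, (l * (c i * c j)) • (Y i * Y j - Y j * Y i))
              = l • ∑ i, ∑ j, (c i * c j) • (Y i * Y j - Y j * Y i) := by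
            rw [Finset.smul_sum]
            exact Finset.sum_congr rfl fun i _ => by
              rw [Finset.smul_sum]
              exact Finset.sum_congr rfl fun j _ => by rw [smul_smul]
          rw [h, hS0, smul_zero, zero_add]
  rw [step1, ← hPM, ← hcross, ← hUM, add_mul, mul_add]
  abel

/-- Solutions of the Gaudin flow `ẏ_i = (λ_i p + Σ_j y_j) × y_i` give rise to
the Lax equation `dL(λ)/dt = [L(λ), M(λ)]` (stated entrywise). -/
theorem gaudin_lax_equation {N : ℕ} (p : Fin 3 → ℝ) (lam : Fin N → ℝ)
    (hlam : Function.Injective lam) (y : Fin N → ℝ → Fin 3 → ℝ)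
    (hflow : ∀ i t, HasDerivAt (y i)
      ((lam i • p + ∑ j : Fin N, y j t) ⨯₃ y i t) t)
    (l : ℝ) (hl : ∀ i, l ≠ lam i) (t : ℝ) (k m : Fin 2) :
    HasDerivAt (fun t => gaudinLax p lam (fun i => y i t) l k m)
      ((gaudinLax p lam (fun i => y i t) l * gaudinM lam (fun i => y i t) l -
        gaudinM lam (fun i => y i t) l * gaudinLax p lam (fun i => y i t) l) k m)
      t := by
  set c : Fin N → ℂ := fun i => ((l : ℂ) - (lam i : ℂ))⁻¹ with hcdef
  have hc0 : ∀ i, (l : ℂ) - (lam i : ℂ) ≠ 0 := by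
    intro i h
    exact hl i (by exact_mod_cast sub_eq_zero.mp h)
  have hlc : ∀ i, (lam i : ℂ) * c i = (l : ℂ) * c i - 1 := by
    intro i
    have h := hc0 i
    simp only [hcdef]
    rw [eq_sub_iff_add_eq]
    have h2 : ((l : ℂ) - (lam i : ℂ)) * ((l : ℂ) - (lam i : ℂ))⁻¹ = 1 := mul_inv_cancel₀ h
    linear_combination -h2
  have hD : HasDerivAt (fun t => gaudinLax p lam (fun i => y i t) l k m)
      ((∑ i, c i • su2 ((lam i • p + ∑ j, y j t) ⨯₃ y i t)) k m) t := by
    have hd := (hasDerivAt_const t (su2 p k m)).add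
      (HasDerivAt.sum (fun i (_ : i ∈ Finset.univ) =>
        ((su2_entry_deriv (y i) _ t (hflow i t) k m).const_mul (c i))))
    simp only [gaudinLax, Matrix.add_apply, Matrix.sum_apply, Matrix.smul_apply, smul_eq_mul,
      Matrix.sum_apply, zero_add] at hd ⊢
    exact hd.congr_of_eventuallyEq (Filter.Eventually.of_forall fun s => by
      simp [Finset.sum_apply, hcdef])
  have hkey : (∑ i, c i • su2 ((lam i • p + ∑ j, y j t) ⨯₃ y i t))
      = gaudinLax p lam (fun i => y i t) l * gaudinM lam (fun i => y i t) l -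
        gaudinM lam (fun i => y i t) l * gaudinLax p lam (fun i => y i t) l := by
    have e1 : ∀ i, su2 ((lam i • p + ∑ j, y j t) ⨯₃ y i t)
        = ((lam i : ℂ) • su2 p + ∑ j, su2 (y j t)) * su2 (y i t)
          - su2 (y i t) * ((lam i : ℂ) • su2 p + ∑ j, su2 (y j t)) := by
      intro i
      rw [su2_cross, su2_smul_add, su2_sum]
    calc (∑ i, c i • su2 ((lam i • p + ∑ j, y j t) ⨯₃ y i t))
        = ∑ i, c i • (((lam i : ℂ) • su2 p + ∑ j, su2 (y j t)) * su2 (y i t)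
            - su2 (y i t) * ((lam i : ℂ) • su2 p + ∑ j, su2 (y j t))) :=
          Finset.sum_congr rfl fun i _ => by rw [e1 i]
      _ = _ := by
          rw [gaudin_key (su2 p) (fun i => su2 (y i t)) (fun i => (lam i : ℂ)) c l hlc]
          rfl
  rw [hkey] at hD
  exact hD
end

section
/- Let m, a : ℝ → ℝ³ satisfy the Clebsch equations ṁ = a × (B₁ a), ȧ = m × a, with B₁ = diag(0, k², k² - 1). Then K₁ = ⟨m,a⟩, K₂ = (1/2)⟨a,a⟩, I₁ = (1/2)⟨m,m⟩ - (1/2)⟨a, B₁a⟩ and I₂ = (1/2)⟨m, Am⟩ - (1/2)⟨a, B₂a⟩ (with A = diag(1-k²,1,0), B₂ = diag(0,0,k²-1)) are all conserved along the flow. -/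
open Matrix

/-- Along the Clebsch flow `ṁ = a × (B₁a)`, `ȧ = m × a` with
`B₁ = diag(0,k²,k²-1)`, the quantities `K₁ = ⟨m,a⟩`, `K₂ = (1/2)⟨a,a⟩`,
`I₁ = (1/2)⟨m,m⟩ - (1/2)⟨a,B₁a⟩`, `I₂ = (1/2)⟨m,Am⟩ - (1/2)⟨a,B₂a⟩`
(with `A = diag(1-k²,1,0)`, `B₂ = diag(0,0,k²-1)`) are conserved. -/
theorem clebsch_conserved (k : ℝ) (m a : ℝ → Fin 3 → ℝ)
    (hm : ∀ t, HasDerivAt m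
      (a t ⨯₃ (Matrix.diagonal ![0, k ^ 2, k ^ 2 - 1] *ᵥ a t)) t)
    (ha : ∀ t, HasDerivAt a (m t ⨯₃ a t) t) (t : ℝ) :
    HasDerivAt (fun t => m t ⬝ᵥ a t) 0 t ∧
    HasDerivAt (fun t => (1 / 2 : ℝ) * (a t ⬝ᵥ a t)) 0 t ∧
    HasDerivAt (fun t => (1 / 2 : ℝ) * (m t ⬝ᵥ m t) -
      (1 / 2 : ℝ) * (a t ⬝ᵥ (Matrix.diagonal ![0, k ^ 2, k ^ 2 - 1] *ᵥ a t)))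
      0 t ∧
    HasDerivAt (fun t => (1 / 2 : ℝ) *
        (m t ⬝ᵥ (Matrix.diagonal ![1 - k ^ 2, 1, 0] *ᵥ m t)) -
      (1 / 2 : ℝ) * (a t ⬝ᵥ (Matrix.diagonal ![0, 0, k ^ 2 - 1] *ᵥ a t)))
      0 t := by
  have hm' := hasDerivAt_pi.mp (hm t)
  have ha' := hasDerivAt_pi.mp (ha t)
  simp only [crossProduct, mulVec, dotProduct, diagonal, Fin.sum_univ_three,
    LinearMap.mk₂_apply, Matrix.cons_val_zero, Matrix.cons_val_one,
    Matrix.head_cons, Matrix.cons_val_two, Matrix.tail_cons, of_apply] at hm' ha'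
  have hm0 := hm' 0
  have hm1 := hm' 1
  have hm2 := hm' 2
  have ha0 := ha' 0
  have ha1 := ha' 1
  have ha2 := ha' 2
  simp only [Matrix.cons_val_zero, Matrix.cons_val_one, Matrix.head_cons,
    Matrix.cons_val_two, Matrix.tail_cons, Fin.isValue, reduceIte,
    show ((2:Fin 3) = 0) = False by simp, show ((2:Fin 3) = 1) = False by simp,
    show ((1:Fin 3) = 0) = False by simp, show ((1:Fin 3) = 2) = False by simp,
    show ((0:Fin 3) = 1) = False by simp, show ((0:Fin 3) = 2) = False by simp,
    if_true, if_false, zero_mul, mul_zero, add_zero, zero_add] at hm0 hm1 hm2 ha0 ha1 ha2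
  refine ⟨?_, ?_, ?_, ?_⟩
  · simp only [dotProduct, Fin.sum_univ_three]
    refine (((hm0.mul ha0).add (hm1.mul ha1)).add (hm2.mul ha2)).congr_deriv ?_
    ring
  · simp only [dotProduct, Fin.sum_univ_three]
    refine (HasDerivAt.const_mul (1/2 : ℝ)
      (((ha0.mul ha0).add (ha1.mul ha1)).add (ha2.mul ha2))).congr_deriv ?_
    ring
  · simp only [dotProduct, mulVec, diagonal, Fin.sum_univ_three, of_apply,
      Matrix.cons_val_zero, Matrix.cons_val_one, Matrix.head_cons,
      Matrix.cons_val_two, Matrix.tail_cons, Fin.isValue,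
      show ((2:Fin 3) = 0) = False by simp, show ((2:Fin 3) = 1) = False by simp,
      show ((1:Fin 3) = 0) = False by simp, show ((1:Fin 3) = 2) = False by simp,
      show ((0:Fin 3) = 1) = False by simp, show ((0:Fin 3) = 2) = False by simp,
      if_true, if_false, zero_mul, mul_zero, add_zero, zero_add]
    refine ((HasDerivAt.const_mul (1/2 : ℝ)
        (((hm0.mul hm0).add (hm1.mul hm1)).add (hm2.mul hm2))).sub
      (HasDerivAt.const_mul (1/2 : ℝ)
        ((ha1.mul (ha1.const_mul (k^2))).add
          (ha2.mul (ha2.const_mul (k^2 - 1)))))).congr_deriv ?_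
    all_goals ring
  · simp only [dotProduct, mulVec, diagonal, Fin.sum_univ_three, of_apply,
      Matrix.cons_val_zero, Matrix.cons_val_one, Matrix.head_cons,
      Matrix.cons_val_two, Matrix.tail_cons, Fin.isValue,
      show ((2:Fin 3) = 0) = False by simp, show ((2:Fin 3) = 1) = False by simp,
      show ((1:Fin 3) = 0) = False by simp, show ((1:Fin 3) = 2) = False by simp,
      show ((0:Fin 3) = 1) = False by simp, show ((0:Fin 3) = 2) = False by simp,
      if_true, if_false, zero_mul, mul_zero, add_zero, zero_add]
    refine ((HasDerivAt.const_mul (1/2 : ℝ)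
        ((hm0.mul (hm0.const_mul (1 - k^2))).add (hm1.mul (hm1.const_mul 1)))).sub
      (HasDerivAt.const_mul (1/2 : ℝ)
        (ha2.mul (ha2.const_mul (k^2 - 1))))).congr_deriv ?_
    all_goals ring
end
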